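/- For every δ > 0 and every c > 0 there exists a twice continuously differentiable function û : ℝ → ℝ satisfying δû''(z) + cû'(z) + û(z)(1 − û(z)) = 0 for all z ∈ ℝ, with lim_{z→−∞} (û(z), û'(z)) = (1, 0) and lim_{z→+∞} (û(z), û'(z)) = (0, 0). That is, for every positive speed c there is a heteroclinic orbit of the F-KPP travelling-wave system connecting the equilibrium (1,0) to the equilibrium (0,0). -/

import Mathlib

set_option linter.unusedSectionVars false

open Set Filter Metric Real





section ODE
variable {E : Type*} [NormedAddCommGroup E] [NormedSpace ℝ E] [CompleteSpace E]
variable {v : E → E} {K : NNReal} {Cb : ℝ}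

/-- Solutions on `Icc (-n) n` for a globally Lipschitz, globally bounded field. -/
lemma exists_Icc_solution (hv : LipschitzWith K v) (hCb : ∀ p, ‖v p‖ ≤ Cb) (x₀ : E) (n : ℕ) :
    ∃ f : ℝ → E, f 0 = x₀ ∧ ∀ t ∈ Icc (-(n:ℝ)) n,
      HasDerivWithinAt f (v (f t)) (Icc (-(n:ℝ)) n) t := by
  have h0 : (0:ℝ) ≤ Cb := le_trans (norm_nonneg _) (hCb x₀)
  have hn : (0:ℝ) ∈ Icc (-(n:ℝ)) n := ⟨by simp, by simp⟩
  have hpl : IsPicardLindelof (fun _ => v) (⟨0, hn⟩ : Icc (-(n:ℝ)) n) x₀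
      (Real.toNNReal (Cb * n)) 0 (Real.toNNReal Cb) K :=
    IsPicardLindelof.of_time_independent
      (fun x _ => by rw [Real.coe_toNNReal _ h0]; exact hCb x) hv.lipschitzOnWith
      (by
        simp only [Real.coe_toNNReal _ h0, Real.coe_toNNReal _ (mul_nonneg h0 (Nat.cast_nonneg n)),
          NNReal.coe_zero, sub_zero, zero_sub, neg_neg, max_self]
        exact le_refl _)
  exact hpl.exists_eq_forall_mem_Icc_hasDerivWithinAt₀

/-- Uniqueness of global solutions of an autonomous Lipschitz ODE. -/
lemma global_sol_unique (hv : LipschitzWith K v) {α β : ℝ → E} {t₀ : ℝ}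
    (hα : ∀ t, HasDerivAt α (v (α t)) t) (hβ : ∀ t, HasDerivAt β (v (β t)) t)
    (h0 : α t₀ = β t₀) : α = β := by
  funext t
  rcases exists_gt (max (|t - t₀|) 0) with ⟨T, hT⟩
  have h1 : |t - t₀| < T := lt_of_le_of_lt (le_max_left _ _) hT
  have h2 : 0 < T := lt_of_le_of_lt (le_max_right _ _) hT
  have := ODE_solution_unique_of_mem_Ioo (v := fun _ => v) (s := fun _ => univ)
    (f := α) (g := β) (K := K) (fun _ _ => hv.lipschitzOnWith)
    (t₀ := t₀) (a := t₀ - T) (b := t₀ + T) (by constructor <;> linarith)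
    (fun s _ => ⟨hα s, trivial⟩) (fun s _ => ⟨hβ s, trivial⟩) h0
  apply this
  constructor <;> [linarith [neg_abs_le (t - t₀)]; linarith [le_abs_self (t - t₀)]]

/-- Global existence for a globally Lipschitz, globally bounded field. -/
lemma exists_global_solution (hv : LipschitzWith K v) (hCb : ∀ p, ‖v p‖ ≤ Cb) (x₀ : E) :
    ∃ α : ℝ → E, α 0 = x₀ ∧ ∀ t, HasDerivAt α (v (α t)) t := by
  choose F hF0 hF using exists_Icc_solution hv hCb x₀
  -- agreement of the Icc-solutions
  have hcont : ∀ n : ℕ, ContinuousOn (F n) (Icc (-(n:ℝ)) n) := fun n s hs =>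
    (hF n s hs).continuousWithinAt
  have hderiv : ∀ (n : ℕ) (s : ℝ), s ∈ Ioo (-(n:ℝ)) n → HasDerivAt (F n) (v (F n s)) s := by
    intro n s hs
    exact (hF n s (Ioo_subset_Icc_self hs)).hasDerivAt (Icc_mem_nhds hs.1 hs.2)
  have aux : ∀ m n : ℕ, (m:ℝ) ≤ n → ∀ t ∈ Ioo (-(m:ℝ)) m, F m t = F n t := by
    intro m n h t htm
    have := ODE_solution_unique_of_mem_Ioo (v := fun _ => v) (s := fun _ => univ)
      (f := F m) (g := F n) (K := K) (fun _ _ => hv.lipschitzOnWith)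
      (t₀ := 0) (a := -(m:ℝ)) (b := m)
      (by constructor <;> [linarith [htm.1, htm.2]; linarith [htm.1, htm.2]])
      (fun s hs => ⟨hderiv m s hs, trivial⟩)
      (fun s hs => ⟨hderiv n s ⟨by linarith [hs.1], by linarith [hs.2]⟩, trivial⟩)
      ((hF0 m).trans (hF0 n).symm)
    exact this htm
  have agree : ∀ m n : ℕ, ∀ t : ℝ, t ∈ Ioo (-(m:ℝ)) m → t ∈ Ioo (-(n:ℝ)) n →
      F m t = F n t := by
    intro m n t htm htn
    rcases le_total (m:ℝ) (n:ℝ) with h | h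
    · exact aux m n h t htm
    · exact (aux n m h t htn).symm
  have hself : ∀ t : ℝ, t ∈ Ioo (-((Nat.ceil |t| + 1 : ℕ):ℝ)) ((Nat.ceil |t| + 1 : ℕ):ℝ) := by
    intro t
    have h1 : |t| < ((Nat.ceil |t| + 1 : ℕ):ℝ) := by
      push_cast
      exact lt_of_le_of_lt (Nat.le_ceil _) (by linarith)
    constructor
    · linarith [neg_abs_le t]
    · linarith [le_abs_self t]
  refine ⟨fun t => F (Nat.ceil |t| + 1) t, ?_, ?_⟩
  · exact hF0 _
  · intro t
    set n := Nat.ceil |t| + 1 with hn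
    have heq : ∀ s ∈ Ioo (-(n:ℝ)) n, F (Nat.ceil |s| + 1) s = F n s := fun s hs =>
      agree _ n s (hself s) hs
    have hmem : Ioo (-(n:ℝ)) n ∈ nhds t := Ioo_mem_nhds (hself t).1 (hself t).2
    have hev : (fun s => F (Nat.ceil |s| + 1) s) =ᶠ[nhds t] F n :=
      eventually_of_mem hmem heq
    have := (hderiv n t (hself t)).congr_of_eventuallyEq hev
    rwa [show F n t = F (Nat.ceil |t| + 1) t from (heq t (hself t)).symm] at this

end ODE






section Consts
variable (c : ℝ)

/-- positive root of `μ² + cμ = 1`. -/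
noncomputable def mu : ℝ := (Real.sqrt (c^2 + 4) - c) / 2

variable {c}

lemma mu_pos (hc : 0 < c) : 0 < mu c := by
  have h : c < Real.sqrt (c^2 + 4) := by
    have h2 := Real.sqrt_lt_sqrt (sq_nonneg c) (show c^2 < c^2 + 4 by linarith)
    rwa [Real.sqrt_sq hc.le] at h2
  unfold mu; linarith

lemma mu_sq (hc : 0 < c) : (mu c)^2 = 1 - c * mu c := by
  have h : Real.sqrt (c^2+4) ^ 2 = c^2 + 4 := Real.sq_sqrt (by positivity)
  unfold mu; nlinarith [h]

lemma cmu_lt_one (hc : 0 < c) : c * mu c < 1 := by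
  nlinarith [mu_sq hc, mu_pos hc]

lemma cmu_pos (hc : 0 < c) : 0 < c * mu c := mul_pos hc (mu_pos hc)

lemma mu_lt_one (hc : 0 < c) : mu c < 1 := by
  nlinarith [mu_sq hc, cmu_pos hc, mu_pos hc]

/-- lower slope of the cone. -/
noncomputable def sa (c : ℝ) : ℝ := mu c / 2
/-- upper slope of the cone. -/
noncomputable def sb (c : ℝ) : ℝ := Real.sqrt (1 - c * mu c / 2)
/-- width of the cone. -/
noncomputable def eta (c : ℝ) : ℝ := c * mu c / 2
/-- energy margin -/
noncomputable def eps0 (c : ℝ) : ℝ := c * mu c * (eta c)^2 / 24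

variable (hc : 0 < c)
include hc

lemma sb_sq : (sb c)^2 = 1 - c * mu c / 2 := by
  unfold sb; rw [sq]; exact Real.mul_self_sqrt (by nlinarith [cmu_lt_one hc])

lemma sb_pos : 0 < sb c := by
  unfold sb; apply Real.sqrt_pos.2; nlinarith [cmu_lt_one hc]

lemma sb_le_one : sb c ≤ 1 := by
  nlinarith [sb_sq hc, sb_pos hc, cmu_pos hc]

lemma sa_pos : 0 < sa c := by unfold sa; linarith [mu_pos hc]

lemma sa_lt_sb : sa c < sb c := by
  have h1 := sb_sq hc
  have h2 := mu_sq hc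
  have h3 := cmu_pos hc
  have h4 := mu_pos hc
  have h5 := sb_pos hc
  unfold sa
  nlinarith [sq_nonneg (mu c / 2 - sb c), mul_pos h4 h5]

lemma mu_lt_sb : mu c < sb c := by
  have h1 := sb_sq hc
  have h2 := mu_sq hc
  nlinarith [cmu_pos hc, mu_pos hc, sb_pos hc]

lemma eta_pos : 0 < eta c := by unfold eta; linarith [cmu_pos hc]

lemma eta_lt_half : eta c < 1/2 := by unfold eta; linarith [cmu_lt_one hc]

lemma eps0_pos : 0 < eps0 c := by
  unfold eps0; have := eta_pos hc; have := cmu_pos hc; positivity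

/-- the key lower-edge quantity `1 - c·sa - sa² = (3 - cμ)/4 > 1/2`. -/
lemma fa_gt_half : 1/2 < 1 - c * sa c - (sa c)^2 := by
  have h2 := mu_sq hc
  have := cmu_lt_one hc
  unfold sa; nlinarith

lemma fb_neg : 1 - c * sb c - (sb c)^2 < 0 := by
  have h1 := sb_sq hc
  have h2 := mu_lt_sb hc
  have h4 := mu_pos hc
  nlinarith

end Consts








/-- clamp to `[-2, 2]` -/
noncomputable def cl (x : ℝ) : ℝ := max (-2) (min 2 x)

lemma cl_eq {x : ℝ} (h : |x| ≤ 2) : cl x = x := by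
  rw [abs_le] at h; unfold cl
  rw [min_eq_right h.2, max_eq_right h.1]

lemma cl_abs_le (x : ℝ) : |cl x| ≤ 2 := by
  unfold cl; rw [abs_le]
  constructor
  · exact le_max_left _ _
  · exact max_le (by norm_num) (min_le_left _ _)

lemma cl_lip (x y : ℝ) : |cl x - cl y| ≤ |x - y| := by
  have h1 : |min 2 x - min 2 y| ≤ |x - y| := by
    have := abs_min_sub_min_le_max (2:ℝ) x 2 y
    simpa using this
  have h2 : |cl x - cl y| ≤ |min 2 x - min 2 y| := by
    unfold cl
    rw [max_comm (-2) (min 2 x), max_comm (-2) (min 2 y)]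
    exact abs_max_sub_max_le_abs _ _ _
  exact h2.trans h1

/-- the (cutoff) travelling-wave field -/
noncomputable def Fc (c : ℝ) (p : ℝ × ℝ) : ℝ × ℝ :=
  (cl p.2, -(c * cl p.2) - cl p.1 * (1 - cl p.1))

/-- Lipschitz constant -/
noncomputable def Kc (c : ℝ) : NNReal := Real.toNNReal (c + 6)

lemma Fc_lip {c : ℝ} (hc : 0 < c) : LipschitzWith (Kc c) (Fc c) := by
  apply LipschitzWith.of_dist_le_mul
  intro p q
  have hK : ((Kc c) : ℝ) = c + 6 := Real.coe_toNNReal _ (by linarith)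
  rw [hK]
  have h1 : dist p.1 q.1 ≤ dist p q := le_max_left _ _
  have h2 : dist p.2 q.2 ≤ dist p q := le_max_right _ _
  rw [Real.dist_eq] at h1 h2
  have hd : 0 ≤ dist p q := dist_nonneg
  have c1 := cl_lip p.1 q.1
  have c2 := cl_lip p.2 q.2
  have a1 := cl_abs_le p.1
  have a2 := cl_abs_le q.1
  rw [Prod.dist_eq]
  apply max_le
  · rw [Real.dist_eq]; unfold Fc; dsimp only
    nlinarith
  · rw [Real.dist_eq]; unfold Fc; dsimp only
    have key : -(c * cl p.2) - cl p.1 * (1 - cl p.1) - (-(c * cl q.2) - cl q.1 * (1 - cl q.1))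
        = -(c * (cl p.2 - cl q.2)) - (cl p.1 - cl q.1) * (1 - cl p.1 - cl q.1) := by ring
    rw [key]
    have e1 : |(-(c * (cl p.2 - cl q.2)) - (cl p.1 - cl q.1) * (1 - cl p.1 - cl q.1))|
        ≤ c * |cl p.2 - cl q.2| + |cl p.1 - cl q.1| * |1 - cl p.1 - cl q.1| := by
      refine (abs_sub _ _).trans ?_
      rw [abs_neg, abs_mul, abs_mul, abs_of_pos hc]
    have e2 : |1 - cl p.1 - cl q.1| ≤ 5 := by
      rw [abs_le] at a1 a2 ⊢; constructor <;> linarith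
    have e3 : |cl p.1 - cl q.1| ≥ 0 := abs_nonneg _
    nlinarith [abs_nonneg (cl p.2 - cl q.2)]

lemma Fc_bound {c : ℝ} (hc : 0 < c) (p : ℝ × ℝ) : ‖Fc c p‖ ≤ 2*c + 10 := by
  have a1 := cl_abs_le p.1
  have a2 := cl_abs_le p.2
  rw [Prod.norm_def]
  apply max_le
  · rw [Real.norm_eq_abs]; unfold Fc; dsimp only; linarith
  · rw [Real.norm_eq_abs]; unfold Fc; dsimp only
    have : |(-(c * cl p.2) - cl p.1 * (1 - cl p.1))| ≤ c * |cl p.2| + |cl p.1| * |1 - cl p.1| := by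
      refine (abs_sub _ _).trans ?_
      rw [abs_neg, abs_mul, abs_mul, abs_of_pos hc]
    have h3 : |1 - cl p.1| ≤ 3 := by rw [abs_le] at a1 ⊢; constructor <;> linarith
    nlinarith [abs_nonneg (cl p.1), abs_nonneg (cl p.2)]






section Helpers

variable {E : Type*} [NormedAddCommGroup E] [NormedSpace ℝ E] [CompleteSpace E]

lemma hasDerivAt_fst {p : ℝ → ℝ × ℝ} {d : ℝ × ℝ} {t : ℝ} (hp : HasDerivAt p d t) :
    HasDerivAt (fun t => (p t).1) d.1 t :=
  (ContinuousLinearMap.fst ℝ ℝ ℝ).hasFDerivAt.comp_hasDerivAt t hp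

lemma hasDerivAt_snd {p : ℝ → ℝ × ℝ} {d : ℝ × ℝ} {t : ℝ} (hp : HasDerivAt p d t) :
    HasDerivAt (fun t => (p t).2) d.2 t :=
  (ContinuousLinearMap.snd ℝ ℝ ℝ).hasFDerivAt.comp_hasDerivAt t hp

/-- If `f τ = 0` and `f' τ < 0` then `f < 0` just after `τ`. -/
lemma eventually_neg_right {f : ℝ → ℝ} {d τ : ℝ} (hf : HasDerivAt f d τ) (hd : d < 0)
    (h0 : f τ = 0) : ∀ᶠ t in nhdsWithin τ (Ioi τ), f t < 0 := by
  have hs := hasDerivAt_iff_tendsto_slope.mp hf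
  have h1 : ∀ᶠ z in nhdsWithin τ {τ}ᶜ, slope f τ z < 0 := hs.eventually (Iio_mem_nhds hd)
  have h2 : nhdsWithin τ (Ioi τ) ≤ nhdsWithin τ {τ}ᶜ :=
    nhdsWithin_mono τ (fun z hz => ne_of_gt hz)
  filter_upwards [h2 h1, self_mem_nhdsWithin] with z hz hz'
  rw [slope_def_field] at hz
  have hzτ : (0:ℝ) < z - τ := sub_pos.2 hz'
  have := (div_neg_iff.mp hz)
  rcases this with ⟨_, h⟩ | ⟨h, _⟩
  · linarith
  · rw [h0] at h; linarith [h]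

/-- Continuity in initial conditions from Grönwall. -/
lemma dist_le_global {v : E → E} {K : NNReal} (hv : LipschitzWith K v) {α β : ℝ → E}
    (hα : ∀ t, HasDerivAt α (v (α t)) t) (hβ : ∀ t, HasDerivAt β (v (β t)) t)
    {T t : ℝ} (h : t ∈ Icc 0 T) :
    dist (α t) (β t) ≤ dist (α 0) (β 0) * Real.exp (K * t) := by
  have := dist_le_of_trajectories_ODE (v := fun _ => v) (K := K) (f := α) (g := β)
    (a := 0) (b := T) (δ := dist (α 0) (β 0)) (fun _ => hv)
    (fun s _ => (hα s).continuousAt.continuousWithinAt)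
    (fun s _ => (hα s).hasDerivWithinAt)
    (fun s _ => (hβ s).continuousAt.continuousWithinAt)
    (fun s _ => (hβ s).hasDerivWithinAt)
    le_rfl t h
  simpa using this

end Helpers

section Cone

/-- shooting initial point -/
noncomputable def Qp (c s : ℝ) : ℝ × ℝ := (1 - eta c / 2, -(s * (eta c / 2)))

/-- the backward-invariant cone at the saddle `(1,0)` -/
def cone (c : ℝ) : Set (ℝ × ℝ) :=
  {p | 0 ≤ 1 - p.1 ∧ 1 - p.1 ≤ eta c ∧ sa c * (1 - p.1) ≤ -p.2 ∧ -p.2 ≤ sb c * (1 - p.1)}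

variable {c : ℝ}

lemma isClosed_cone : IsClosed (cone c) := by
  have : cone c = {p : ℝ×ℝ | 0 ≤ 1 - p.1} ∩ ({p : ℝ×ℝ | 1 - p.1 ≤ eta c} ∩
      ({p : ℝ×ℝ | sa c * (1 - p.1) ≤ -p.2} ∩ {p : ℝ×ℝ | -p.2 ≤ sb c * (1 - p.1)})) := rfl
  rw [this]
  refine (isClosed_le continuous_const (by fun_prop)).inter
    ((isClosed_le (by fun_prop) continuous_const).inter
    ((isClosed_le (by fun_prop) (by fun_prop)).inter (isClosed_le (by fun_prop) (by fun_prop))))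

lemma cone_box (hc : 0 < c) {p : ℝ × ℝ} (hp : p ∈ cone c) : |p.1| ≤ 2 ∧ |p.2| ≤ 2 := by
  obtain ⟨h1, h2, h3, h4⟩ := hp
  have hη := eta_lt_half hc
  have hsb := sb_le_one hc
  have hsa := sa_pos hc
  have hsb0 := sb_pos hc
  constructor
  · rw [abs_le]; constructor <;> linarith
  · rw [abs_le]
    have hy1 : -p.2 ≤ 1 := by nlinarith
    have hy0 : 0 ≤ -p.2 := le_trans (by nlinarith) h3
    constructor <;> linarith

lemma Qp_mem_cone (hc : 0 < c) {s : ℝ} (hs : s ∈ Icc (sa c) (sb c)) : Qp c s ∈ cone c := by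
  have hη := eta_pos hc
  refine ⟨by simp [Qp]; linarith, by simp [Qp]; linarith, ?_, ?_⟩
  · simp only [Qp]
    ring_nf
    nlinarith [hs.1]
  · simp only [Qp]
    ring_nf
    nlinarith [hs.2]

variable {β : ℝ → ℝ × ℝ} (hβ : ∀ t, HasDerivAt β (-(Fc c (β t))) t)
include hβ

lemma bx_deriv (t : ℝ) : HasDerivAt (fun t => (β t).1) (-(cl ((β t).2))) t := by
  have := hasDerivAt_fst (hβ t); simpa [Fc] using this

lemma by_deriv (t : ℝ) :
    HasDerivAt (fun t => (β t).2) (c * cl ((β t).2) + cl ((β t).1) * (1 - cl ((β t).1))) t := by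
  have := hasDerivAt_snd (hβ t)
  simp only [Fc, Prod.snd_neg, neg_sub, neg_neg] at this
  convert this using 1; ring

lemma bw_deriv (t : ℝ) : HasDerivAt (fun t => 1 - (β t).1) (cl ((β t).2)) t := by
  simpa using (bx_deriv hβ t).const_sub 1

lemma bcont : Continuous β := by
  rw [continuous_iff_continuousAt]; exact fun t => (hβ t).continuousAt

/-- in-cone versions of derivatives -/
lemma bx_deriv' (hc : 0 < c) {t : ℝ} (ht : β t ∈ cone c) :
    HasDerivAt (fun t => (β t).1) (-((β t).2)) t := by
  have := bx_deriv hβ t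
  rwa [cl_eq (cone_box hc ht).2] at this

lemma by_deriv' (hc : 0 < c) {t : ℝ} (ht : β t ∈ cone c) :
    HasDerivAt (fun t => (β t).2) (c * ((β t).2) + ((β t).1) * (1 - ((β t).1))) t := by
  have := by_deriv hβ t
  rwa [cl_eq (cone_box hc ht).2, cl_eq (cone_box hc ht).1] at this

lemma bw_deriv' (hc : 0 < c) {t : ℝ} (ht : β t ∈ cone c) :
    HasDerivAt (fun t => 1 - (β t).1) ((β t).2) t := by
  have := bw_deriv hβ t
  rwa [cl_eq (cone_box hc ht).2] at this

/-- exponential upper/lower bounds on `w = 1 - x` while in the cone -/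
lemma bw_exp_bounds (hc : 0 < c) {T : ℝ} (hT : 0 ≤ T)
    (hin : ∀ τ ∈ Icc (0:ℝ) T, β τ ∈ cone c) {t : ℝ} (ht : t ∈ Icc (0:ℝ) T) :
    (1 - (β t).1) * Real.exp (sa c * t) ≤ (1 - (β 0).1) ∧
      (1 - (β 0).1) ≤ (1 - (β t).1) * Real.exp (sb c * t) := by
  have hcont := bcont hβ
  have hder : ∀ (r : ℝ) (τ : ℝ), HasDerivAt (fun t => (1 - (β t).1) * Real.exp (r * t))
      (cl ((β τ).2) * Real.exp (r * τ) + (1 - (β τ).1) * (Real.exp (r * τ) * r)) τ := by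
    intro r τ
    have he : HasDerivAt (fun t => Real.exp (r * t)) (Real.exp (r * τ) * r) τ := by
      simpa using ((hasDerivAt_id τ).const_mul r).exp
    exact (bw_deriv hβ τ).mul he
  constructor
  · have hanti : AntitoneOn (fun t => (1 - (β t).1) * Real.exp (sa c * t)) (Icc 0 T) := by
      apply antitoneOn_of_deriv_nonpos (convex_Icc 0 T)
      · exact ((continuous_const.sub (continuous_fst.comp hcont)).mul (by fun_prop)).continuousOn
      · intro τ _
        exact ((hder (sa c) τ).differentiableAt).differentiableWithinAt
      · intro τ hτ
        rw [interior_Icc] at hτ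
        have hτC := hin τ ⟨hτ.1.le, hτ.2.le⟩
        rw [(hder (sa c) τ).deriv, cl_eq (cone_box hc hτC).2]
        have h3 := hτC.2.2.1
        have hexp : (0:ℝ) < Real.exp (sa c * τ) := Real.exp_pos _
        nlinarith
    have := hanti (left_mem_Icc.2 hT) ht ht.1
    simpa using this
  · have hmono : MonotoneOn (fun t => (1 - (β t).1) * Real.exp (sb c * t)) (Icc 0 T) := by
      apply monotoneOn_of_deriv_nonneg (convex_Icc 0 T)
      · exact ((continuous_const.sub (continuous_fst.comp hcont)).mul (by fun_prop)).continuousOn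
      · intro τ _
        exact ((hder (sb c) τ).differentiableAt).differentiableWithinAt
      · intro τ hτ
        rw [interior_Icc] at hτ
        have hτC := hin τ ⟨hτ.1.le, hτ.2.le⟩
        rw [(hder (sb c) τ).deriv, cl_eq (cone_box hc hτC).2]
        have h4 := hτC.2.2.2
        have hexp : (0:ℝ) < Real.exp (sb c * τ) := Real.exp_pos _
        nlinarith
    have := hmono (left_mem_Icc.2 hT) ht ht.1
    simpa using this

end Cone
section Cone2

variable {c : ℝ} {β : ℝ → ℝ × ℝ} (hβ : ∀ t, HasDerivAt β (-(Fc c (β t))) t)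
include hβ

lemma bw_bounds (hc : 0 < c) {s T : ℝ} (hT : 0 ≤ T) (hβ0 : β 0 = Qp c s)
    (hin : ∀ τ ∈ Icc (0:ℝ) T, β τ ∈ cone c) {t : ℝ} (ht : t ∈ Icc (0:ℝ) T) :
    (eta c / 2) * Real.exp (-(sb c * t)) ≤ 1 - (β t).1 ∧
      1 - (β t).1 ≤ (eta c / 2) * Real.exp (-(sa c * t)) ∧
      0 < 1 - (β t).1 ∧ 1 - (β t).1 ≤ eta c / 2 := by
  obtain ⟨h1, h2⟩ := bw_exp_bounds hβ hc hT hin ht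
  have hw0 : 1 - (β 0).1 = eta c / 2 := by rw [hβ0]; simp [Qp]
  rw [hw0] at h1 h2
  have hea : (0:ℝ) < Real.exp (sa c * t) := Real.exp_pos _
  have heb : (0:ℝ) < Real.exp (sb c * t) := Real.exp_pos _
  have hη := eta_pos hc
  have e1 : 1 - (β t).1 ≤ (eta c / 2) * Real.exp (-(sa c * t)) := by
    rw [Real.exp_neg, ← div_eq_mul_inv, le_div_iff₀ hea]
    exact h1
  have e2 : (eta c / 2) * Real.exp (-(sb c * t)) ≤ 1 - (β t).1 := by
    rw [Real.exp_neg, ← div_eq_mul_inv, div_le_iff₀ heb]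
    exact h2
  have e3 : 0 < 1 - (β t).1 := lt_of_lt_of_le (by positivity) e2
  have e4 : 1 - (β t).1 ≤ eta c / 2 := by
    refine e1.trans ?_
    have : Real.exp (-(sa c * t)) ≤ 1 := by
      rw [Real.exp_le_one_iff]
      have := sa_pos hc
      nlinarith [ht.1]
    nlinarith
  exact ⟨e2, e1, e3, e4⟩

/-- crossing the lower edge `P = 0`: `P` becomes negative immediately after -/
lemma P_exit (hc : 0 < c) {t : ℝ} (hw0 : 0 < 1 - (β t).1) (hwη : 1 - (β t).1 ≤ eta c)
    (hP : -(β t).2 - sa c * (1 - (β t).1) = 0) :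
    ∀ᶠ τ in nhdsWithin t (Ioi t), -(β τ).2 - sa c * (1 - (β τ).1) < 0 := by
  have hη2 := eta_lt_half hc
  have hsa := sa_pos hc
  have hsa2 : sa c < 1 := by have := mu_lt_one hc; have := mu_pos hc; unfold sa; linarith
  have hbox1 : |(β t).1| ≤ 2 := by rw [abs_le]; constructor <;> linarith
  have hbox2 : |(β t).2| ≤ 2 := by
    have : (β t).2 = -(sa c * (1 - (β t).1)) := by linarith
    rw [this, abs_le]; constructor <;> nlinarith
  have hx := bx_deriv hβ t; rw [cl_eq hbox2] at hx
  have hy := by_deriv hβ t; rw [cl_eq hbox2, cl_eq hbox1] at hy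
  have hPd : HasDerivAt (fun τ => -(β τ).2 - sa c * (1 - (β τ).1))
      (-(c * (β t).2 + (β t).1 * (1 - (β t).1)) - sa c * (β t).2) t := by
    have h1 := (hy.neg).sub ((((hx).const_sub 1)).const_mul (sa c))
    refine h1.congr_deriv ?_
    ring
  apply eventually_neg_right hPd _ hP
  -- the derivative is negative
  have hy2 : (β t).2 = -(sa c * (1 - (β t).1)) := by linarith
  have hfa := fa_gt_half hc
  rw [hy2]
  nlinarith [hw0, hwη]

/-- crossing the upper edge `N = 0`: `N` becomes negative immediately after -/
lemma N_exit (hc : 0 < c) {t : ℝ} (hw0 : 0 < 1 - (β t).1) (hwη : 1 - (β t).1 ≤ eta c)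
    (hN : (β t).2 + sb c * (1 - (β t).1) = 0) :
    ∀ᶠ τ in nhdsWithin t (Ioi t), (β τ).2 + sb c * (1 - (β τ).1) < 0 := by
  have hη2 := eta_lt_half hc
  have hsb := sb_pos hc
  have hsb1 := sb_le_one hc
  have hbox1 : |(β t).1| ≤ 2 := by rw [abs_le]; constructor <;> linarith
  have hbox2 : |(β t).2| ≤ 2 := by
    have : (β t).2 = -(sb c * (1 - (β t).1)) := by linarith
    rw [this, abs_le]; constructor <;> nlinarith
  have hx := bx_deriv hβ t; rw [cl_eq hbox2] at hx
  have hy := by_deriv hβ t; rw [cl_eq hbox2, cl_eq hbox1] at hy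
  have hNd : HasDerivAt (fun τ => (β τ).2 + sb c * (1 - (β τ).1))
      ((c * (β t).2 + (β t).1 * (1 - (β t).1)) + sb c * (β t).2) t := by
    have h1 := hy.add ((((hx).const_sub 1)).const_mul (sb c))
    refine h1.congr_deriv ?_
    ring
  apply eventually_neg_right hNd _ hN
  have hy2 : (β t).2 = -(sb c * (1 - (β t).1)) := by linarith
  have hfb := fb_neg hc
  rw [hy2]
  nlinarith [hw0, hwη]

end Cone2
section Wazewski

variable (c : ℝ) (B : ℝ → ℝ → ℝ × ℝ)

/-- exit through the lower edge -/
def Wp : Set ℝ :=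
  {s | ∃ τ₁, 0 ≤ τ₁ ∧ -(B s τ₁).2 - sa c * (1 - (B s τ₁).1) < 0 ∧
    ∀ τ ∈ Icc (0:ℝ) τ₁, 0 < (B s τ).2 + sb c * (1 - (B s τ).1) ∧
      0 < 1 - (B s τ).1 ∧ 1 - (B s τ).1 < eta c}

/-- exit through the upper edge -/
def Wn : Set ℝ :=
  {s | ∃ τ₁, 0 ≤ τ₁ ∧ (B s τ₁).2 + sb c * (1 - (B s τ₁).1) < 0 ∧
    ∀ τ ∈ Icc (0:ℝ) τ₁, 0 < -(B s τ).2 - sa c * (1 - (B s τ).1) ∧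
      0 < 1 - (B s τ).1 ∧ 1 - (B s τ).1 < eta c}

variable {c B}

lemma Wp_Wn_disjoint : Wp c B ∩ Wn c B = ∅ := by
  ext s
  simp only [mem_inter_iff, mem_empty_iff_false, iff_false, not_and]
  rintro ⟨τ₁, hτ₁0, hP, hall⟩ ⟨τ₂, hτ₂0, hN, hall'⟩
  rcases le_total τ₁ τ₂ with h | h
  · have := hall' τ₁ ⟨hτ₁0, h⟩
    linarith [this.1]
  · have := hall τ₂ ⟨hτ₂0, h⟩
    linarith [this.1]

lemma Fc_neg_lip (hc : 0 < c) : LipschitzWith (Kc c) (fun p => -(Fc c p)) := by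
  apply LipschitzWith.of_dist_le_mul
  intro p q
  rw [dist_neg_neg]
  exact (Fc_lip hc).dist_le_mul p q

lemma comp_est_fst (p q : ℝ × ℝ) : |p.1 - q.1| ≤ dist p q := by
  rw [Prod.dist_eq, ← Real.dist_eq]; exact le_max_left _ _

lemma comp_est_snd (p q : ℝ × ℝ) : |p.2 - q.2| ≤ dist p q := by
  rw [Prod.dist_eq, ← Real.dist_eq]; exact le_max_right _ _

lemma dist_Qp (hc : 0 < c) (s s' : ℝ) : dist (Qp c s) (Qp c s') = |s - s'| * (eta c / 2) := by
  have hη := eta_pos hc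
  rw [Prod.dist_eq]
  simp only [Qp, Real.dist_eq]
  rw [sub_self, abs_zero]
  have : -(s * (eta c / 2)) - -(s' * (eta c / 2)) = -((s - s') * (eta c / 2)) := by ring
  rw [this, abs_neg, abs_mul, abs_of_pos (by linarith : (0:ℝ) < eta c / 2)]
  exact max_eq_right (by positivity)

variable (hc : 0 < c) (hB : ∀ s t, HasDerivAt (B s) (-(Fc c (B s t))) t)
    (hB0 : ∀ s, B s 0 = Qp c s)
include hc hB hB0

/-- continuity of the flow in the shooting parameter -/
lemma B_cont_dep {s s' T t : ℝ} (ht : t ∈ Icc 0 T) :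
    dist (B s t) (B s' t) ≤ |s - s'| * (eta c / 2) * Real.exp ((Kc c : ℝ) * T) := by
  have h1 := dist_le_global (Fc_neg_lip hc) (hB s) (hB s') ht
  rw [hB0 s, hB0 s', dist_Qp hc] at h1
  refine h1.trans ?_
  have h2 : Real.exp ((Kc c : ℝ) * t) ≤ Real.exp ((Kc c : ℝ) * T) := by
    apply Real.exp_le_exp.2
    have : (0:ℝ) ≤ (Kc c : ℝ) := (Kc c).2
    nlinarith [ht.1, ht.2]
  have h3 : (0:ℝ) ≤ |s - s'| * (eta c / 2) :=
    mul_nonneg (abs_nonneg _) (by linarith [eta_pos hc])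
  nlinarith [Real.exp_pos ((Kc c : ℝ) * t)]

lemma sa_lt_one' : sa c < 1 := by
  have := mu_lt_one hc; have := mu_pos hc; unfold sa; linarith

/-- openness of the exit sets -/
lemma W_open_aux (sgn : Bool) :
    IsOpen (if sgn then Wp c B else Wn c B) := by
  rw [Metric.isOpen_iff]
  intro s hs
  -- unified treatment: define the exit functional and the positive functionals
  set Pf : ℝ → ℝ → ℝ := fun s τ => -(B s τ).2 - sa c * (1 - (B s τ).1) with hPf
  set Nf : ℝ → ℝ → ℝ := fun s τ => (B s τ).2 + sb c * (1 - (B s τ).1) with hNf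
  set Ef : ℝ → ℝ → ℝ := fun s τ => if sgn then Pf s τ else Nf s τ with hEf
  set Of : ℝ → ℝ → ℝ := fun s τ => if sgn then Nf s τ else Pf s τ with hOf
  have hs' : ∃ τ₁, 0 ≤ τ₁ ∧ Ef s τ₁ < 0 ∧
      ∀ τ ∈ Icc (0:ℝ) τ₁, 0 < Of s τ ∧ 0 < 1 - (B s τ).1 ∧ 1 - (B s τ).1 < eta c := by
    cases sgn <;> simpa [hEf, hOf, hPf, hNf, Wp, Wn] using hs
  obtain ⟨τ₁, hτ₁0, hP, hall⟩ := hs'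
  have hBc : ∀ s' : ℝ, Continuous (B s') := fun s' => bcont (hB s')
  have hcomp : IsCompact (Icc (0:ℝ) τ₁) := isCompact_Icc
  have hne : (Icc (0:ℝ) τ₁).Nonempty := nonempty_Icc.2 hτ₁0
  have hPcont : Continuous (Pf s) := by simp only [hPf]; fun_prop
  have hNcont : Continuous (Nf s) := by simp only [hNf]; fun_prop
  have hOcont : Continuous (Of s) := by
    cases sgn
    · exact hPcont
    · exact hNcont
  obtain ⟨t₂, ht₂, hmin₂'⟩ := hcomp.exists_isMinOn hne hOcont.continuousOn
  obtain ⟨t₃, ht₃, hmin₃'⟩ := hcomp.exists_isMinOn hne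
    (Continuous.continuousOn (by fun_prop : Continuous (fun τ => 1 - (B s τ).1)))
  obtain ⟨t₄, ht₄, hmin₄'⟩ := hcomp.exists_isMinOn hne
    (Continuous.continuousOn (by fun_prop : Continuous (fun τ => eta c - (1 - (B s τ).1))))
  have hmin₂ := isMinOn_iff.mp hmin₂'
  have hmin₃ := isMinOn_iff.mp hmin₃'
  have hmin₄ := isMinOn_iff.mp hmin₄'
  set m₂ := Of s t₂ with hm₂
  set m₃ := 1 - (B s t₃).1 with hm₃
  set m₄ := eta c - (1 - (B s t₄).1) with hm₄
  have hm₂0 : 0 < m₂ := (hall t₂ ht₂).1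
  have hm₃0 : 0 < m₃ := (hall t₃ ht₃).2.1
  have hm₄0 : 0 < m₄ := by have := (hall t₄ ht₄).2.2; simp only [hm₄]; linarith
  set m₁ := -Ef s τ₁ with hm₁
  have hm₁0 : 0 < m₁ := by simp only [hm₁]; linarith
  set m := min (min (m₁/3) (m₂/3)) (min (m₃/2) (m₄/2)) with hm
  have hmm₁ : m ≤ m₁/3 := le_trans (min_le_left _ _) (min_le_left _ _)
  have hmm₂ : m ≤ m₂/3 := le_trans (min_le_left _ _) (min_le_right _ _)
  have hmm₃ : m ≤ m₃/2 := le_trans (min_le_right _ _) (min_le_left _ _)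
  have hmm₄ : m ≤ m₄/2 := le_trans (min_le_right _ _) (min_le_right _ _)
  have hm0 : 0 < m := by
    simp only [hm, lt_min_iff]
    exact ⟨⟨by linarith, by linarith⟩, by linarith, by linarith⟩
  have hE : (0:ℝ) < (eta c / 2) * Real.exp ((Kc c : ℝ) * τ₁) :=
    mul_pos (by linarith [eta_pos hc]) (Real.exp_pos _)
  refine ⟨m / ((eta c / 2) * Real.exp ((Kc c : ℝ) * τ₁)), div_pos hm0 hE, ?_⟩
  intro s' hs'
  rw [Metric.mem_ball, Real.dist_eq] at hs'
  have hdist : ∀ t ∈ Icc (0:ℝ) τ₁, dist (B s' t) (B s t) < m := by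
    intro t ht
    have h1 := B_cont_dep hc hB hB0 (s := s') (s' := s) (T := τ₁) ht
    have h2 : |s' - s| * ((eta c / 2) * Real.exp ((Kc c : ℝ) * τ₁)) < m :=
      (lt_div_iff₀ hE).mp hs'
    calc dist (B s' t) (B s t) ≤ |s' - s| * (eta c / 2) * Real.exp ((Kc c : ℝ) * τ₁) := h1
      _ = |s' - s| * ((eta c / 2) * Real.exp ((Kc c : ℝ) * τ₁)) := by ring
      _ < m := h2
  have hsa1 := sa_lt_one' hc hB hB0
  have hsb1 := sb_le_one hc
  have hsa0 := sa_pos hc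
  have hsb0 := sb_pos hc
  -- transfer the margins
  have hkey : ∀ t ∈ Icc (0:ℝ) τ₁,
      |Ef s' t - Ef s t| ≤ 2 * dist (B s' t) (B s t) ∧
      |Of s' t - Of s t| ≤ 2 * dist (B s' t) (B s t) ∧
      |(1 - (B s' t).1) - (1 - (B s t).1)| ≤ dist (B s' t) (B s t) := by
    intro t ht
    have hf := comp_est_fst (B s' t) (B s t)
    have hg := comp_est_snd (B s' t) (B s t)
    have habs1 : |Pf s' t - Pf s t| ≤ 2 * dist (B s' t) (B s t) := by
      have : Pf s' t - Pf s t
          = -((B s' t).2 - (B s t).2) + sa c * ((B s' t).1 - (B s t).1) := by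
        simp only [hPf]; ring
      rw [this]
      refine (abs_add_le _ _).trans ?_
      rw [abs_neg, abs_mul, abs_of_pos hsa0]
      nlinarith [abs_nonneg ((B s' t).1 - (B s t).1)]
    have habs2 : |Nf s' t - Nf s t| ≤ 2 * dist (B s' t) (B s t) := by
      have : Nf s' t - Nf s t
          = ((B s' t).2 - (B s t).2) + -(sb c * ((B s' t).1 - (B s t).1)) := by
        simp only [hNf]; ring
      rw [this]
      refine (abs_add_le _ _).trans ?_
      rw [abs_neg, abs_mul, abs_of_pos hsb0]
      nlinarith [abs_nonneg ((B s' t).1 - (B s t).1)]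
    have habs3 : |(1 - (B s' t).1) - (1 - (B s t).1)| ≤ dist (B s' t) (B s t) := by
      have : (1 - (B s' t).1) - (1 - (B s t).1) = -((B s' t).1 - (B s t).1) := by ring
      rw [this, abs_neg]; exact hf
    refine ⟨?_, ?_, habs3⟩ <;> cases sgn <;>
      simp only [hEf, hOf, if_true, if_false] <;> assumption
  have hmem : ∃ τ₁, 0 ≤ τ₁ ∧ Ef s' τ₁ < 0 ∧
      ∀ τ ∈ Icc (0:ℝ) τ₁, 0 < Of s' τ ∧ 0 < 1 - (B s' τ).1 ∧ 1 - (B s' τ).1 < eta c := by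
    refine ⟨τ₁, hτ₁0, ?_, ?_⟩
    · have hd := hdist τ₁ (right_mem_Icc.2 hτ₁0)
      have h1 := (hkey τ₁ (right_mem_Icc.2 hτ₁0)).1
      have := abs_sub_le_iff.mp h1
      have hEs : Ef s τ₁ = -m₁ := by simp only [hm₁]; ring
      linarith [this.1]
    · intro τ hτ
      have hd := hdist τ hτ
      obtain ⟨h1, h2, h3⟩ := hkey τ hτ
      have e1 := abs_sub_le_iff.mp h1
      have e2 := abs_sub_le_iff.mp h2
      have e3 := abs_sub_le_iff.mp h3
      have o1 := hmin₂ τ hτ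
      have o2 := hmin₃ τ hτ
      have o3 := hmin₄ τ hτ
      refine ⟨by linarith, by linarith, by linarith⟩
  cases sgn <;> simpa [hEf, hOf, hPf, hNf, Wp, Wn] using hmem

lemma Wp_open : IsOpen (Wp c B) := by
  have := W_open_aux hc hB hB0 (B := B) true
  simpa using this

lemma Wn_open : IsOpen (Wn c B) := by
  have := W_open_aux hc hB hB0 (B := B) false
  simpa using this

end Wazewski
section Wazewski2

variable {c : ℝ} {B : ℝ → ℝ → ℝ × ℝ}
variable (hc : 0 < c) (hB : ∀ s t, HasDerivAt (B s) (-(Fc c (B s t))) t)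
    (hB0 : ∀ s, B s 0 = Qp c s)
include hc hB hB0

lemma sa_mem_Wp : sa c ∈ Wp c B := by
  have hη := eta_pos hc
  have hη2 := eta_lt_half hc
  have hsalt := sa_lt_sb hc
  set s := sa c with hsdef
  have hBc : Continuous (B s) := bcont (hB s)
  have hw0 : 1 - (B s 0).1 = eta c / 2 := by rw [hB0 s]; simp [Qp]
  have hy0 : (B s 0).2 = -(s * (eta c / 2)) := by rw [hB0 s]; rfl
  have hP0 : -(B s 0).2 - sa c * (1 - (B s 0).1) = 0 := by
    rw [hw0, hy0, hsdef]; ring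
  have hevP := P_exit (hB s) hc (by rw [hw0]; linarith) (by rw [hw0]; linarith) hP0
  have hNc : Continuous (fun τ => (B s τ).2 + sb c * (1 - (B s τ).1)) := by fun_prop
  have hwc : Continuous (fun τ => 1 - (B s τ).1) := by fun_prop
  have hN0 : 0 < (B s 0).2 + sb c * (1 - (B s 0).1) := by
    rw [hw0, hy0, hsdef]; nlinarith
  have hev1 : ∀ᶠ τ in nhds (0:ℝ), 0 < (B s τ).2 + sb c * (1 - (B s τ).1) :=
    (hNc.tendsto 0).eventually (eventually_gt_nhds hN0)
  have hev2 : ∀ᶠ τ in nhds (0:ℝ), 0 < 1 - (B s τ).1 :=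
    (hwc.tendsto 0).eventually (eventually_gt_nhds (by rw [hw0]; linarith))
  have hev3 : ∀ᶠ τ in nhds (0:ℝ), 1 - (B s τ).1 < eta c :=
    (hwc.tendsto 0).eventually (eventually_lt_nhds (by rw [hw0]; linarith))
  obtain ⟨ρ, hρ0, hball⟩ := Metric.eventually_nhds_iff.mp ((hev1.and hev2).and hev3)
  have hioo : Ioo (0:ℝ) ρ ∈ nhdsWithin (0:ℝ) (Ioi 0) :=
    Ioo_mem_nhdsGT_of_mem ⟨le_rfl, hρ0⟩
  obtain ⟨τ₁, hPneg, hτ₁⟩ := (hevP.and hioo).exists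
  refine ⟨τ₁, hτ₁.1.le, hPneg, ?_⟩
  intro τ hτ
  have : dist τ (0:ℝ) < ρ := by
    rw [Real.dist_eq, sub_zero, abs_of_nonneg hτ.1]
    exact lt_of_le_of_lt hτ.2 hτ₁.2
  have h := hball this
  exact ⟨h.1.1, h.1.2, h.2⟩

lemma sb_mem_Wn : sb c ∈ Wn c B := by
  have hη := eta_pos hc
  have hη2 := eta_lt_half hc
  have hsalt := sa_lt_sb hc
  set s := sb c with hsdef
  have hBc : Continuous (B s) := bcont (hB s)
  have hw0 : 1 - (B s 0).1 = eta c / 2 := by rw [hB0 s]; simp [Qp]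
  have hy0 : (B s 0).2 = -(s * (eta c / 2)) := by rw [hB0 s]; rfl
  have hN0 : (B s 0).2 + sb c * (1 - (B s 0).1) = 0 := by
    rw [hw0, hy0, hsdef]; ring
  have hevN := N_exit (hB s) hc (by rw [hw0]; linarith) (by rw [hw0]; linarith) hN0
  have hPc : Continuous (fun τ => -(B s τ).2 - sa c * (1 - (B s τ).1)) := by fun_prop
  have hwc : Continuous (fun τ => 1 - (B s τ).1) := by fun_prop
  have hP0 : 0 < -(B s 0).2 - sa c * (1 - (B s 0).1) := by
    rw [hw0, hy0, hsdef]; nlinarith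
  have hev1 : ∀ᶠ τ in nhds (0:ℝ), 0 < -(B s τ).2 - sa c * (1 - (B s τ).1) :=
    (hPc.tendsto 0).eventually (eventually_gt_nhds hP0)
  have hev2 : ∀ᶠ τ in nhds (0:ℝ), 0 < 1 - (B s τ).1 :=
    (hwc.tendsto 0).eventually (eventually_gt_nhds (by rw [hw0]; linarith))
  have hev3 : ∀ᶠ τ in nhds (0:ℝ), 1 - (B s τ).1 < eta c :=
    (hwc.tendsto 0).eventually (eventually_lt_nhds (by rw [hw0]; linarith))
  obtain ⟨ρ, hρ0, hball⟩ := Metric.eventually_nhds_iff.mp ((hev1.and hev2).and hev3)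
  have hioo : Ioo (0:ℝ) ρ ∈ nhdsWithin (0:ℝ) (Ioi 0) :=
    Ioo_mem_nhdsGT_of_mem ⟨le_rfl, hρ0⟩
  obtain ⟨τ₁, hNneg, hτ₁⟩ := (hevN.and hioo).exists
  refine ⟨τ₁, hτ₁.1.le, hNneg, ?_⟩
  intro τ hτ
  have : dist τ (0:ℝ) < ρ := by
    rw [Real.dist_eq, sub_zero, abs_of_nonneg hτ.1]
    exact lt_of_le_of_lt hτ.2 hτ₁.2
  have h := hball this
  exact ⟨h.1.1, h.1.2, h.2⟩

end Wazewski2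
section Wazewski3

variable {c : ℝ} {B : ℝ → ℝ → ℝ × ℝ}
variable (hc : 0 < c) (hB : ∀ s t, HasDerivAt (B s) (-(Fc c (B s t))) t)
    (hB0 : ∀ s, B s 0 = Qp c s)
include hc hB hB0

lemma cone_forever {s : ℝ} (hs : s ∈ Icc (sa c) (sb c))
    (hnp : s ∉ Wp c B) (hnn : s ∉ Wn c B) : ∀ t, 0 ≤ t → B s t ∈ cone c := by
  by_contra hbad
  push_neg at hbad
  obtain ⟨t₁, ht₁0, ht₁⟩ := hbad
  set Bad := {t : ℝ | 0 ≤ t ∧ B s t ∉ cone c} with hBadDef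
  have hBadne : Bad.Nonempty := ⟨t₁, ht₁0, ht₁⟩
  have hBadbdd : BddBelow Bad := ⟨0, fun b hb => hb.1⟩
  set T := sInf Bad with hTdef
  have hT0 : 0 ≤ T := le_csInf hBadne (fun b hb => hb.1)
  have hBc : Continuous (B s) := bcont (hB s)
  have hin : ∀ τ, 0 ≤ τ → τ < T → B s τ ∈ cone c := by
    intro τ h0 hlt
    by_contra hno
    exact absurd (csInf_le hBadbdd ⟨h0, hno⟩) (not_le.2 hlt)
  have hconeT : B s T ∈ cone c := by
    rcases eq_or_lt_of_le hT0 with h | h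
    · rw [← h, hB0 s]; exact Qp_mem_cone hc hs
    · by_contra hno
      have hev : ∀ᶠ τ in nhds T, B s τ ∉ cone c :=
        hBc.continuousAt.preimage_mem_nhds (isClosed_cone.isOpen_compl.mem_nhds hno)
      obtain ⟨ρ, hρ0, hball⟩ := Metric.eventually_nhds_iff.mp hev
      set τ := max (T - ρ/2) (T/2) with hτdef
      have hτ0 : 0 ≤ τ := le_trans (by linarith) (le_max_right _ _)
      have hτT : τ < T := max_lt (by linarith) (by linarith)
      have hτρ : dist τ T < ρ := by
        rw [Real.dist_eq, abs_of_nonpos (by linarith)]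
        have : T - ρ/2 ≤ τ := le_max_left _ _
        linarith
      exact (hball hτρ) (hin τ hτ0 hτT)
  have hfreq : ∀ ρ, 0 < ρ → ∃ τ, T < τ ∧ τ < T + ρ ∧ B s τ ∉ cone c := by
    intro ρ hρ
    obtain ⟨b, hbBad, hbT⟩ := (csInf_lt_iff hBadbdd hBadne).mp
      (show sInf Bad < T + ρ by rw [← hTdef]; linarith)
    have hTb : T ≤ b := csInf_le hBadbdd hbBad
    rcases eq_or_lt_of_le hTb with h | h
    · exact absurd hconeT (h ▸ hbBad.2)
    · exact ⟨b, h, hbT, hbBad.2⟩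
  have hinT : ∀ τ ∈ Icc (0:ℝ) T, B s τ ∈ cone c := by
    intro τ hτ; rcases lt_or_eq_of_le hτ.2 with h | h
    · exact hin τ hτ.1 h
    · rw [h]; exact hconeT
  have hwb : ∀ t ∈ Icc (0:ℝ) T, 0 < 1 - (B s t).1 ∧ 1 - (B s t).1 ≤ eta c / 2 := by
    intro t ht
    have := bw_bounds (hB s) hc hT0 (hB0 s) hinT ht
    exact ⟨this.2.2.1, this.2.2.2⟩
  have hη := eta_pos hc
  have hwTpos : 0 < 1 - (B s T).1 := (hwb T (right_mem_Icc.2 hT0)).1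
  have hwThalf : 1 - (B s T).1 ≤ eta c / 2 := (hwb T (right_mem_Icc.2 hT0)).2
  have hPT : 0 ≤ -(B s T).2 - sa c * (1 - (B s T).1) := by
    have := hconeT.2.2.1; linarith
  have hNT : 0 ≤ (B s T).2 + sb c * (1 - (B s T).1) := by
    have := hconeT.2.2.2; linarith
  have hwc : Continuous (fun τ => 1 - (B s τ).1) := by fun_prop
  have hNc : Continuous (fun τ => (B s τ).2 + sb c * (1 - (B s τ).1)) := by fun_prop
  have hPc : Continuous (fun τ => -(B s τ).2 - sa c * (1 - (B s τ).1)) := by fun_prop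
  -- classification of the exit
  have hPN : -(B s T).2 - sa c * (1 - (B s T).1) = 0 ∨
      (B s T).2 + sb c * (1 - (B s T).1) = 0 := by
    by_contra hcon
    push_neg at hcon
    have hP' : 0 < -(B s T).2 - sa c * (1 - (B s T).1) := lt_of_le_of_ne hPT (Ne.symm hcon.1)
    have hN' : 0 < (B s T).2 + sb c * (1 - (B s T).1) := lt_of_le_of_ne hNT (Ne.symm hcon.2)
    have hev1 : ∀ᶠ τ in nhds T, 0 < -(B s τ).2 - sa c * (1 - (B s τ).1) :=
      (hPc.tendsto T).eventually (eventually_gt_nhds hP')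
    have hev2 : ∀ᶠ τ in nhds T, 0 < (B s τ).2 + sb c * (1 - (B s τ).1) :=
      (hNc.tendsto T).eventually (eventually_gt_nhds hN')
    have hev3 : ∀ᶠ τ in nhds T, 0 < 1 - (B s τ).1 :=
      (hwc.tendsto T).eventually (eventually_gt_nhds hwTpos)
    have hev4 : ∀ᶠ τ in nhds T, 1 - (B s τ).1 < eta c :=
      (hwc.tendsto T).eventually (eventually_lt_nhds (by linarith))
    obtain ⟨ρ, hρ0, hball⟩ := Metric.eventually_nhds_iff.mp ((hev1.and hev2).and (hev3.and hev4))
    obtain ⟨τ, hτ1, hτ2, hτ3⟩ := hfreq ρ hρ0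
    have : dist τ T < ρ := by rw [Real.dist_eq, abs_of_pos (by linarith)]; linarith
    obtain ⟨⟨e1, e2⟩, e3, e4⟩ := hball this
    exact hτ3 ⟨by linarith, by linarith, by linarith, by linarith⟩
  have hsalt := sa_lt_sb hc
  rcases hPN with hcase | hcase
  · -- exit through the lower edge: s ∈ Wp
    apply hnp
    have hNTpos : 0 < (B s T).2 + sb c * (1 - (B s T).1) := by nlinarith
    have hNall : ∀ τ ∈ Icc (0:ℝ) T, 0 < (B s τ).2 + sb c * (1 - (B s τ).1) := by
      intro τ hτ
      rcases lt_or_eq_of_le hτ.2 with hlt | heq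
      swap
      · rw [heq]; exact hNTpos
      by_contra hno
      push_neg at hno
      have hN0 : (B s τ).2 + sb c * (1 - (B s τ).1) = 0 := by
        have := (hinT τ hτ).2.2.2; linarith
      have hevN := N_exit (hB s) hc (hwb τ hτ).1 (by linarith [(hwb τ hτ).2]) hN0
      have hioo : Ioo τ T ∈ nhdsWithin τ (Ioi τ) := Ioo_mem_nhdsGT_of_mem ⟨le_rfl, hlt⟩
      obtain ⟨τ', hτ'neg, hτ'mem⟩ := (hevN.and hioo).exists
      have hmem := hinT τ' ⟨le_trans hτ.1 hτ'mem.1.le, hτ'mem.2.le⟩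
      have := hmem.2.2.2; linarith
    have hevP := P_exit (hB s) hc hwTpos (by linarith) hcase
    have hev2 : ∀ᶠ τ in nhds T, 0 < (B s τ).2 + sb c * (1 - (B s τ).1) :=
      (hNc.tendsto T).eventually (eventually_gt_nhds hNTpos)
    have hev3 : ∀ᶠ τ in nhds T, 0 < 1 - (B s τ).1 :=
      (hwc.tendsto T).eventually (eventually_gt_nhds hwTpos)
    have hev4 : ∀ᶠ τ in nhds T, 1 - (B s τ).1 < eta c :=
      (hwc.tendsto T).eventually (eventually_lt_nhds (by linarith))
    obtain ⟨ρ, hρ0, hball⟩ := Metric.eventually_nhds_iff.mp (hev2.and (hev3.and hev4))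
    have hioo : Ioo T (T+ρ) ∈ nhdsWithin T (Ioi T) :=
      Ioo_mem_nhdsGT_of_mem ⟨le_rfl, by linarith⟩
    obtain ⟨τ₁, hPneg, hτ₁⟩ := (hevP.and hioo).exists
    refine ⟨τ₁, by linarith [hτ₁.1], hPneg, ?_⟩
    intro τ hτ
    rcases le_or_gt τ T with hle | hgt
    · exact ⟨hNall τ ⟨hτ.1, hle⟩, (hwb τ ⟨hτ.1, hle⟩).1, by linarith [(hwb τ ⟨hτ.1, hle⟩).2]⟩
    · have : dist τ T < ρ := by
        rw [Real.dist_eq, abs_of_pos (by linarith)]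
        linarith [hτ.2, hτ₁.2]
      exact hball this
  · -- exit through the upper edge: s ∈ Wn
    apply hnn
    have hPTpos : 0 < -(B s T).2 - sa c * (1 - (B s T).1) := by nlinarith
    have hPall : ∀ τ ∈ Icc (0:ℝ) T, 0 < -(B s τ).2 - sa c * (1 - (B s τ).1) := by
      intro τ hτ
      rcases lt_or_eq_of_le hτ.2 with hlt | heq
      swap
      · rw [heq]; exact hPTpos
      by_contra hno
      push_neg at hno
      have hP0 : -(B s τ).2 - sa c * (1 - (B s τ).1) = 0 := by
        have := (hinT τ hτ).2.2.1; linarith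
      have hevP := P_exit (hB s) hc (hwb τ hτ).1 (by linarith [(hwb τ hτ).2]) hP0
      have hioo : Ioo τ T ∈ nhdsWithin τ (Ioi τ) := Ioo_mem_nhdsGT_of_mem ⟨le_rfl, hlt⟩
      obtain ⟨τ', hτ'neg, hτ'mem⟩ := (hevP.and hioo).exists
      have hmem := hinT τ' ⟨le_trans hτ.1 hτ'mem.1.le, hτ'mem.2.le⟩
      have := hmem.2.2.1; linarith
    have hevN := N_exit (hB s) hc hwTpos (by linarith) hcase
    have hev2 : ∀ᶠ τ in nhds T, 0 < -(B s τ).2 - sa c * (1 - (B s τ).1) :=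
      (hPc.tendsto T).eventually (eventually_gt_nhds hPTpos)
    have hev3 : ∀ᶠ τ in nhds T, 0 < 1 - (B s τ).1 :=
      (hwc.tendsto T).eventually (eventually_gt_nhds hwTpos)
    have hev4 : ∀ᶠ τ in nhds T, 1 - (B s τ).1 < eta c :=
      (hwc.tendsto T).eventually (eventually_lt_nhds (by linarith))
    obtain ⟨ρ, hρ0, hball⟩ := Metric.eventually_nhds_iff.mp (hev2.and (hev3.and hev4))
    have hioo : Ioo T (T+ρ) ∈ nhdsWithin T (Ioi T) :=
      Ioo_mem_nhdsGT_of_mem ⟨le_rfl, by linarith⟩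
    obtain ⟨τ₁, hNneg, hτ₁⟩ := (hevN.and hioo).exists
    refine ⟨τ₁, by linarith [hτ₁.1], hNneg, ?_⟩
    intro τ hτ
    rcases le_or_gt τ T with hle | hgt
    · exact ⟨hPall τ ⟨hτ.1, hle⟩, (hwb τ ⟨hτ.1, hle⟩).1, by linarith [(hwb τ ⟨hτ.1, hle⟩).2]⟩
    · have : dist τ T < ρ := by
        rw [Real.dist_eq, abs_of_pos (by linarith)]
        linarith [hτ.2, hτ₁.2]
      exact hball this

/-- Ważewski: some shooting parameter stays in the cone forever (backward time). -/
lemma exists_good_param : ∃ s ∈ Icc (sa c) (sb c), ∀ t, 0 ≤ t → B s t ∈ cone c := by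
  by_contra hno
  push_neg at hno
  have hsub : Icc (sa c) (sb c) ⊆ Wp c B ∪ Wn c B := by
    intro s hs
    by_contra hmem
    rw [mem_union] at hmem
    push_neg at hmem
    obtain ⟨t, ht0, htc⟩ := hno s hs
    exact htc (cone_forever hc hB hB0 hs hmem.1 hmem.2 t ht0)
  have hconn : IsPreconnected (Icc (sa c) (sb c)) := isPreconnected_Icc
  have h1 : (Icc (sa c) (sb c) ∩ Wp c B).Nonempty :=
    ⟨sa c, ⟨le_rfl, (sa_lt_sb hc).le⟩, sa_mem_Wp hc hB hB0⟩
  have h2 : (Icc (sa c) (sb c) ∩ Wn c B).Nonempty :=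
    ⟨sb c, ⟨(sa_lt_sb hc).le, le_rfl⟩, sb_mem_Wn hc hB hB0⟩
  obtain ⟨x, _, hx⟩ := hconn (Wp c B) (Wn c B) (Wp_open hc hB hB0) (Wn_open hc hB hB0)
    hsub h1 h2
  have := Wp_Wn_disjoint (c := c) (B := B)
  rw [eq_empty_iff_forall_notMem] at this
  exact this x hx

end Wazewski3
section Forward

/-- potential -/
noncomputable def gE (x : ℝ) : ℝ := x^2/2 - x^3/3
/-- energy -/
noncomputable def EE (p : ℝ × ℝ) : ℝ := p.2^2/2 + gE p.1

lemma gE_nonneg {x : ℝ} (h1 : -1 ≤ x) (h2 : x ≤ 1) : 0 ≤ gE x := by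
  unfold gE; nlinarith [sq_nonneg x]

lemma gE_le {x : ℝ} (h : x ≤ 1) : 1/6 - (1-x)/4 ≤ gE x := by
  unfold gE
  nlinarith [mul_nonneg (by linarith : (0:ℝ) ≤ 1 - x) (by nlinarith [sq_nonneg (2*x - 1/2)] :
    (0:ℝ) ≤ 4*x^2 - 2*x + 1)]

lemma EE_cont : Continuous (EE) := by unfold EE gE; fun_prop

/-- forward trapping region -/
def SS (c : ℝ) : Set (ℝ × ℝ) := {p | -1 < p.1 ∧ p.1 < 1 ∧ EE p < 1/6 - eps0 c / 2}

lemma SS_open {c : ℝ} : IsOpen (SS c) := by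
  have : SS c = {p : ℝ×ℝ | -1 < p.1} ∩ ({p : ℝ×ℝ | p.1 < 1} ∩ {p : ℝ×ℝ | EE p < 1/6 - eps0 c/2}) := rfl
  rw [this]
  exact (isOpen_lt continuous_const continuous_fst).inter
    ((isOpen_lt continuous_fst continuous_const).inter
      (isOpen_lt EE_cont continuous_const))

lemma SS_box {c : ℝ} (hc : 0 < c) {p : ℝ × ℝ} (hp : p ∈ SS c) : |p.1| ≤ 2 ∧ |p.2| ≤ 2 := by
  obtain ⟨h1, h2, h3⟩ := hp
  have hg := gE_nonneg h1.le h2.le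
  have hE : EE p < 1/6 := by have := eps0_pos hc; linarith
  have hy : p.2^2 < 1/3 := by unfold EE at hE; linarith
  refine ⟨by rw [abs_le]; constructor <;> linarith, ?_⟩
  rw [abs_le]; constructor <;> nlinarith

variable {c : ℝ} {γ : ℝ → ℝ × ℝ} (hγ : ∀ t, HasDerivAt γ (Fc c (γ t)) t)
include hγ

lemma fx_deriv (t : ℝ) : HasDerivAt (fun t => (γ t).1) (cl ((γ t).2)) t := by
  have := hasDerivAt_fst (hγ t); simpa [Fc] using this

lemma fy_deriv (t : ℝ) :
    HasDerivAt (fun t => (γ t).2) (-(c * cl ((γ t).2)) - cl ((γ t).1) * (1 - cl ((γ t).1))) t := by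
  have := hasDerivAt_snd (hγ t); simpa [Fc] using this

lemma fcont : Continuous γ := by
  rw [continuous_iff_continuousAt]; exact fun t => (hγ t).continuousAt

/-- global derivative of the energy along the (cutoff) flow -/
lemma fE_deriv (t : ℝ) : HasDerivAt (fun t => EE (γ t))
    ((γ t).2 * (-(c * cl ((γ t).2)) - cl ((γ t).1) * (1 - cl ((γ t).1)))
      + ((γ t).1 - (γ t).1^2) * cl ((γ t).2)) t := by
  have hx := fx_deriv hγ t
  have hy := fy_deriv hγ t
  have h1 := (hy.pow 2).div_const 2
  have h2 := (hx.pow 2).div_const 2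
  have h3 := (hx.pow 3).div_const 3
  have h4 := h1.add (h2.sub h3)
  have : HasDerivAt (fun t => (γ t).2^2/2 + ((γ t).1^2/2 - (γ t).1^3/3))
      ((γ t).2 * (-(c * cl ((γ t).2)) - cl ((γ t).1) * (1 - cl ((γ t).1)))
        + ((γ t).1 - (γ t).1^2) * cl ((γ t).2)) t := by
    refine h4.congr_deriv ?_
    ring
  exact this

/-- in-box version: energy dissipates -/
lemma fE_deriv' (hc : 0 < c) {t : ℝ} (hbox : |(γ t).1| ≤ 2 ∧ |(γ t).2| ≤ 2) :
    HasDerivAt (fun t => EE (γ t)) (-(c * ((γ t).2)^2)) t := by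
  have := fE_deriv hγ t
  rw [cl_eq hbox.1, cl_eq hbox.2] at this
  convert this using 1; ring

end Forward
section Forward2

variable {c : ℝ} {γ : ℝ → ℝ × ℝ} (hγ : ∀ t, HasDerivAt γ (Fc c (γ t)) t)

lemma E0_le (hc : 0 < c) {s : ℝ} (hs : s ∈ Icc (sa c) (sb c)) :
    EE (Qp c s) ≤ 1/6 - eps0 c := by
  have hη : eta c = c * mu c / 2 := rfl
  have hsb2 := sb_sq hc
  have hsa := sa_pos hc
  have hs0 : 0 < s := lt_of_lt_of_le hsa hs.1
  have hs2 : s^2 ≤ (sb c)^2 := by nlinarith [hs.2]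
  have hcm := cmu_pos hc
  have hcm1 := cmu_lt_one hc
  have hee : EE (Qp c s) = (s * (eta c/2))^2/2 + gE (1 - eta c/2) := by
    simp [EE, Qp]
  rw [hee]
  unfold gE eps0
  rw [hη] at *
  nlinarith [sq_nonneg (c * mu c), sq_nonneg s, mul_pos hcm hcm]

include hγ

lemma forward_invariant (hc : 0 < c) {s : ℝ} (hs : s ∈ Icc (sa c) (sb c))
    (hγ0 : γ 0 = Qp c s) : ∀ t, 0 ≤ t → γ t ∈ SS c := by
  have hγc : Continuous γ := fcont hγ
  have hη := eta_pos hc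
  have hη2 := eta_lt_half hc
  have heps := eps0_pos hc
  have hγ0S : γ 0 ∈ SS c := by
    refine ⟨?_, ?_, ?_⟩
    · rw [hγ0]; show -1 < 1 - eta c / 2; linarith
    · rw [hγ0]; show 1 - eta c / 2 < 1; linarith
    · rw [hγ0]; linarith [E0_le hc hs]
  by_contra hbad
  push_neg at hbad
  obtain ⟨t₁, ht₁0, ht₁⟩ := hbad
  set Bad := {t : ℝ | 0 ≤ t ∧ γ t ∉ SS c} with hBadDef
  have hBadcl : IsClosed Bad := by
    have : Bad = Ici 0 ∩ γ ⁻¹' (SS c)ᶜ := rfl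
    rw [this]
    exact isClosed_Ici.inter (SS_open.isClosed_compl.preimage hγc)
  have hBadne : Bad.Nonempty := ⟨t₁, ht₁0, ht₁⟩
  have hBadbdd : BddBelow Bad := ⟨0, fun b hb => hb.1⟩
  set T := sInf Bad with hTdef
  have hTBad : T ∈ Bad := hBadcl.csInf_mem hBadne hBadbdd
  have hT0 : 0 ≤ T := hTBad.1
  have hin : ∀ τ, 0 ≤ τ → τ < T → γ τ ∈ SS c := by
    intro τ h0 hlt
    by_contra hno
    exact absurd (csInf_le hBadbdd ⟨h0, hno⟩) (not_le.2 hlt)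
  have hTpos : 0 < T := by
    rcases eq_or_lt_of_le hT0 with h | h
    · exact absurd (h ▸ hγ0S) hTBad.2
    · exact h
  -- energy is antitone on [0,T]
  have hanti : AntitoneOn (fun t => EE (γ t)) (Icc 0 T) := by
    apply antitoneOn_of_deriv_nonpos (convex_Icc 0 T)
    · exact (EE_cont.comp hγc).continuousOn
    · intro τ _
      exact (fE_deriv hγ τ).differentiableAt.differentiableWithinAt
    · intro τ hτ
      rw [interior_Icc] at hτ
      have hτS := hin τ hτ.1.le hτ.2
      rw [(fE_deriv' hγ hc (SS_box hc hτS)).deriv]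
      nlinarith [sq_nonneg ((γ τ).2)]
  have hET : EE (γ T) ≤ 1/6 - eps0 c := by
    have := hanti (left_mem_Icc.2 hT0) (right_mem_Icc.2 hT0) hT0
    simp only [] at this
    rw [hγ0] at this
    exact le_trans this (E0_le hc hs)
  -- x(T) stays in [-1,1] by continuity
  have hcx : Continuous (fun τ => (γ τ).1) := by fun_prop
  have hxcl : -1 ≤ (γ T).1 ∧ (γ T).1 ≤ 1 := by
    constructor
    · by_contra hno
      push_neg at hno
      have hev : ∀ᶠ τ in nhds T, (γ τ).1 < -1 :=
        (hcx.tendsto T).eventually (eventually_lt_nhds hno)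
      obtain ⟨ρ, hρ0, hball⟩ := Metric.eventually_nhds_iff.mp hev
      set τ := max (T - ρ/2) (T/2) with hτdef
      have hτ0 : 0 ≤ τ := le_trans (by linarith) (le_max_right _ _)
      have hτT : τ < T := max_lt (by linarith) (by linarith)
      have hτρ : dist τ T < ρ := by
        rw [Real.dist_eq, abs_of_nonpos (by linarith)]
        have : T - ρ/2 ≤ τ := le_max_left _ _
        linarith
      have hmem := hin τ hτ0 hτT
      linarith [hmem.1, hball hτρ]
    · by_contra hno
      push_neg at hno
      have hev : ∀ᶠ τ in nhds T, 1 < (γ τ).1 :=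
        (hcx.tendsto T).eventually (eventually_gt_nhds hno)
      obtain ⟨ρ, hρ0, hball⟩ := Metric.eventually_nhds_iff.mp hev
      set τ := max (T - ρ/2) (T/2) with hτdef
      have hτ0 : 0 ≤ τ := le_trans (by linarith) (le_max_right _ _)
      have hτT : τ < T := max_lt (by linarith) (by linarith)
      have hτρ : dist τ T < ρ := by
        rw [Real.dist_eq, abs_of_nonpos (by linarith)]
        have : T - ρ/2 ≤ τ := le_max_left _ _
        linarith
      have hmem := hin τ hτ0 hτT
      linarith [hmem.2.1, hball hτρ]
  -- endpoints are excluded by the energy bound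
  have hx1 : (γ T).1 < 1 := by
    rcases lt_or_eq_of_le hxcl.2 with h | h
    · exact h
    · exfalso
      have : gE ((γ T).1) = 1/6 := by rw [h]; unfold gE; norm_num
      have hEg : gE ((γ T).1) ≤ EE (γ T) := by
        unfold EE; nlinarith [sq_nonneg ((γ T).2)]
      linarith
  have hxm1 : -1 < (γ T).1 := by
    rcases lt_or_eq_of_le hxcl.1 with h | h
    · exact h
    · exfalso
      have : gE ((γ T).1) = 5/6 := by rw [← h]; unfold gE; norm_num
      have hEg : gE ((γ T).1) ≤ EE (γ T) := by
        unfold EE; nlinarith [sq_nonneg ((γ T).2)]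
      linarith
  exact hTBad.2 ⟨hxm1, hx1, by linarith⟩

end Forward2
section Barbalat

/-- Barbalat-type lemma: if `f` converges and `f' = g` is Lipschitz on `[0,∞)`,
then `g → 0`. -/
lemma barbalat {f g : ℝ → ℝ} {L M : ℝ} (hM : 0 < M)
    (hd : ∀ t, 0 ≤ t → HasDerivAt f (g t) t)
    (hlip : ∀ t u, 0 ≤ t → 0 ≤ u → |g t - g u| ≤ M * |t - u|)
    (hf : Tendsto f atTop (nhds L)) : Tendsto g atTop (nhds 0) := by
  rw [Metric.tendsto_atTop] at hf ⊢
  intro ε hε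
  set h := ε / (2*M) with hh
  have hh0 : 0 < h := by positivity
  obtain ⟨N, hN⟩ := hf (ε*h/5) (by positivity)
  refine ⟨max N 0, fun t ht => ?_⟩
  have htN : N ≤ t := le_trans (le_max_left _ _) ht
  have ht0 : 0 ≤ t := le_trans (le_max_right _ _) ht
  rw [Real.dist_0_eq_abs]
  by_contra hcon
  push_neg at hcon
  have hcont : ContinuousOn f (Icc t (t+h)) := fun τ hτ =>
    ((hd τ (le_trans ht0 hτ.1)).continuousAt).continuousWithinAt
  obtain ⟨ξ, hξ, hslope⟩ := exists_hasDerivAt_eq_slope f g (by linarith : t < t+h) hcont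
    (fun τ hτ => hd τ (by linarith [hτ.1.le]))
  have hξ0 : 0 ≤ ξ := by linarith [hξ.1]
  have hgξ : ε/2 ≤ |g ξ| := by
    have h1 := hlip t ξ ht0 hξ0
    have h2 : |t - ξ| ≤ h := by
      rw [abs_le]; constructor <;> linarith [hξ.1, hξ.2]
    have h3 : M * |t - ξ| ≤ M * h := by nlinarith [abs_nonneg (t - ξ)]
    have h4 : M * h = ε/2 := by rw [hh]; field_simp
    have h5 := abs_sub_abs_le_abs_sub (g t) (g ξ)
    linarith [hcon]
  have hdiff : f (t+h) - f t = g ξ * h := by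
    rw [hslope, add_sub_cancel_left, div_mul_cancel₀ _ hh0.ne']
  have hc1 := hN t htN
  have hc2 := hN (t+h) (by linarith)
  rw [Real.dist_eq] at hc1 hc2
  have habs : |f (t+h) - f t| < 2*(ε*h/5) := by
    have := abs_sub_le (f (t+h)) L (f t)
    rw [abs_sub_comm L (f t)] at this
    linarith
  rw [hdiff, abs_mul, abs_of_pos hh0] at habs
  nlinarith [hgξ]

end Barbalat

section Forward3

variable {c : ℝ} {γ : ℝ → ℝ × ℝ} (hγ : ∀ t, HasDerivAt γ (Fc c (γ t)) t)
include hγ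

/-- the trajectory is Lipschitz (cutoff field is bounded) -/
lemma traj_lip (hc : 0 < c) (t u : ℝ) : ‖γ t - γ u‖ ≤ (2*c+10) * ‖t - u‖ := by
  refine Convex.norm_image_sub_le_of_norm_hasDerivWithin_le
    (f := γ) (f' := fun t => Fc c (γ t)) (C := 2*c+10) (s := univ)
    (fun τ _ => (hγ τ).hasDerivWithinAt) (fun τ _ => Fc_bound hc (γ τ)) convex_univ
    (mem_univ u) (mem_univ t)

lemma comp_lip_x (hc : 0 < c) (t u : ℝ) : |(γ t).1 - (γ u).1| ≤ (2*c+10) * |t - u| := by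
  have h := traj_lip hγ hc t u
  have h2 : |(γ t).1 - (γ u).1| ≤ ‖γ t - γ u‖ := by
    have : (γ t).1 - (γ u).1 = (γ t - γ u).1 := rfl
    rw [this, Prod.norm_def, ← Real.norm_eq_abs]
    exact le_max_left _ _
  rw [← Real.norm_eq_abs (t - u)]
  exact h2.trans h

lemma comp_lip_y (hc : 0 < c) (t u : ℝ) : |(γ t).2 - (γ u).2| ≤ (2*c+10) * |t - u| := by
  have h := traj_lip hγ hc t u
  have h2 : |(γ t).2 - (γ u).2| ≤ ‖γ t - γ u‖ := by
    have : (γ t).2 - (γ u).2 = (γ t - γ u).2 := rfl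
    rw [this, Prod.norm_def, ← Real.norm_eq_abs]
    exact le_max_right _ _
  rw [← Real.norm_eq_abs (t - u)]
  exact h2.trans h

/-- forward asymptotics: the trajectory tends to the origin -/
lemma forward_limit (hc : 0 < c) {s : ℝ} (hs : s ∈ Icc (sa c) (sb c))
    (hγ0 : γ 0 = Qp c s) : Tendsto γ atTop (nhds (0, 0)) := by
  have hγc : Continuous γ := fcont hγ
  have hS := forward_invariant hγ hc hs hγ0
  have hbox : ∀ t, 0 ≤ t → |(γ t).1| ≤ 2 ∧ |(γ t).2| ≤ 2 := fun t ht => SS_box hc (hS t ht)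
  have hb1 : ∀ t, 0 ≤ t → |(γ t).1| ≤ 1 := by
    intro t ht
    have h := hS t ht
    rw [abs_le]; exact ⟨h.1.le, h.2.1.le⟩
  have hb2 : ∀ t, 0 ≤ t → |(γ t).2| ≤ 1 := by
    intro t ht
    have h := hS t ht
    have hg := gE_nonneg h.1.le h.2.1.le
    have heps := eps0_pos hc
    have hy : ((γ t).2)^2 < 1/3 := by
      have := h.2.2; unfold EE at this; linarith
    rw [abs_le]; constructor <;> nlinarith
  -- energy converges
  have hanti : AntitoneOn (fun t => EE (γ t)) (Ici 0) := by
    apply antitoneOn_of_deriv_nonpos (convex_Ici 0)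
    · exact (EE_cont.comp hγc).continuousOn
    · intro τ _
      exact (fE_deriv hγ τ).differentiableAt.differentiableWithinAt
    · intro τ hτ
      rw [interior_Ici] at hτ
      rw [(fE_deriv' hγ hc (hbox τ hτ.le)).deriv]
      nlinarith [sq_nonneg ((γ τ).2)]
  set e' : ℝ → ℝ := fun t => EE (γ (max t 0)) with he'
  have he'anti : Antitone e' := by
    intro t u htu
    exact hanti (mem_Ici.2 (le_max_right t 0)) (mem_Ici.2 (le_max_right u 0))
      (max_le_max htu le_rfl)
  have he'bdd : BddBelow (range e') := by
    refine ⟨0, fun z hz => ?_⟩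
    obtain ⟨t, rfl⟩ := hz
    have h := hS (max t 0) (le_max_right t 0)
    have hg := gE_nonneg h.1.le h.2.1.le
    simp only [he', EE]
    nlinarith [sq_nonneg ((γ (max t 0)).2)]
  have he'tend : Tendsto e' atTop (nhds (⨅ t, e' t)) := tendsto_atTop_ciInf he'anti he'bdd
  have heE : Tendsto (fun t => EE (γ t)) atTop (nhds (⨅ t, e' t)) := by
    refine he'tend.congr' ?_
    filter_upwards [eventually_ge_atTop (0:ℝ)] with t ht
    simp only [he', max_eq_left ht]
  -- Barbalat #1 : y → 0
  have hM1 : (0:ℝ) < 2*c*(2*c+10) := by nlinarith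
  have hy2 : Tendsto (fun t => -(c * ((γ t).2)^2)) atTop (nhds 0) := by
    apply barbalat hM1 (fun t ht => fE_deriv' hγ hc (hbox t ht)) _ heE
    intro t u ht hu
    have h1 := comp_lip_y hγ hc t u
    have h2 := hb2 t ht
    have h3 := hb2 u hu
    have key : -(c * ((γ t).2)^2) - -(c * ((γ u).2)^2)
        = -(c * (((γ t).2 - (γ u).2) * ((γ t).2 + (γ u).2))) := by ring
    rw [key, abs_neg, abs_mul, abs_mul, abs_of_pos hc]
    have h4 : |(γ t).2 + (γ u).2| ≤ 2 := by
      rw [abs_le] at h2 h3 ⊢; constructor <;> linarith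
    nlinarith [abs_nonneg ((γ t).2 - (γ u).2), abs_nonneg (t - u),
      mul_le_mul h1 h4 (abs_nonneg _) (by positivity : (0:ℝ) ≤ (2*c+10) * |t - u|)]
  have hytend : Tendsto (fun t => (γ t).2) atTop (nhds 0) := by
    have hsq : Tendsto (fun t => ((γ t).2)^2) atTop (nhds 0) := by
      have := hy2.const_mul (-(1/c))
      simp only [neg_mul, mul_neg, neg_neg] at this
      convert this using 2 with t
      · field_simp
      · simp
    have habs : Tendsto (fun t => |(γ t).2|) atTop (nhds 0) := by
      have h1 : Tendsto (fun t => Real.sqrt (((γ t).2)^2)) atTop (nhds (Real.sqrt 0)) :=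
        (Real.continuous_sqrt.tendsto 0).comp hsq
      rw [Real.sqrt_zero] at h1
      convert h1 using 2 with t
      exact (Real.sqrt_sq_eq_abs _).symm
    exact tendsto_zero_iff_abs_tendsto_zero _ |>.mpr habs
  -- Barbalat #2 : y' → 0, hence x(1-x) → 0
  have hyd : ∀ t, 0 ≤ t → HasDerivAt (fun t => (γ t).2)
      (-(c * ((γ t).2)) - ((γ t).1) * (1 - ((γ t).1))) t := by
    intro t ht
    have := fy_deriv hγ t
    rwa [cl_eq (hbox t ht).1, cl_eq (hbox t ht).2] at this
  have hM2 : (0:ℝ) < (c+3)*(2*c+10) := by nlinarith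
  have hg2 : Tendsto (fun t => -(c * ((γ t).2)) - ((γ t).1) * (1 - ((γ t).1))) atTop (nhds 0) := by
    apply barbalat hM2 hyd _ hytend
    intro t u ht hu
    have h1 := comp_lip_y hγ hc t u
    have h2 := comp_lip_x hγ hc t u
    have hx1 := hb1 t ht
    have hx2 := hb1 u hu
    have key : (-(c * ((γ t).2)) - ((γ t).1) * (1 - ((γ t).1)))
        - (-(c * ((γ u).2)) - ((γ u).1) * (1 - ((γ u).1)))
        = -(c * ((γ t).2 - (γ u).2)) - ((γ t).1 - (γ u).1) * (1 - (γ t).1 - (γ u).1) := by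
      ring
    rw [key]
    refine (abs_sub _ _).trans ?_
    rw [abs_neg, abs_mul, abs_mul, abs_of_pos hc]
    have h4 : |1 - (γ t).1 - (γ u).1| ≤ 3 := by
      rw [abs_le] at hx1 hx2 ⊢; constructor <;> linarith
    nlinarith [abs_nonneg ((γ t).1 - (γ u).1), abs_nonneg (t - u),
      mul_le_mul h2 h4 (abs_nonneg _) (by positivity : (0:ℝ) ≤ (2*c+10) * |t - u|),
      mul_le_mul_of_nonneg_left h1 hc.le]
  have hxx : Tendsto (fun t => ((γ t).1) * (1 - ((γ t).1))) atTop (nhds 0) := by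
    have := (hytend.const_mul (-c)).sub hg2
    simp only [neg_mul, mul_neg] at this ⊢
    convert this using 2 with t
    · ring
    · ring_nf
  -- x stays away from 1  :  1 - x ≥ 4 ε₀
  have hxfar : ∀ t, 0 ≤ t → 2 * eps0 c ≤ 1 - (γ t).1 := by
    intro t ht
    have h := hS t ht
    have hgle := gE_le (h.2.1.le)
    have hEg : gE ((γ t).1) ≤ EE (γ t) := by
      unfold EE; nlinarith [sq_nonneg ((γ t).2)]
    have heps := eps0_pos hc
    have hE := h.2.2
    linarith
  -- hence x → 0
  have hxtend : Tendsto (fun t => (γ t).1) atTop (nhds 0) := by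
    have heps := eps0_pos hc
    rw [Metric.tendsto_atTop] at hxx ⊢
    intro ε hε
    obtain ⟨N, hN⟩ := hxx (ε * (2 * eps0 c)) (by positivity)
    refine ⟨max N 0, fun t ht => ?_⟩
    have htN : N ≤ t := le_trans (le_max_left _ _) ht
    have ht0 : 0 ≤ t := le_trans (le_max_right _ _) ht
    have h1 := hN t htN
    rw [Real.dist_0_eq_abs] at h1 ⊢
    have h2 := hxfar t ht0
    have h3 : |(γ t).1| * (2 * eps0 c) ≤ |(γ t).1| * (1 - (γ t).1) := by
      apply mul_le_mul_of_nonneg_left h2 (abs_nonneg _)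
    have h4 : |(γ t).1| * (1 - (γ t).1) = |((γ t).1) * (1 - ((γ t).1))| := by
      rw [abs_mul, abs_of_pos (by linarith : (0:ℝ) < 1 - (γ t).1)]
    rw [← mul_lt_mul_iff_left₀ (by positivity : (0:ℝ) < 2 * eps0 c)]
    calc |(γ t).1| * (2 * eps0 c) ≤ |((γ t).1) * (1 - ((γ t).1))| := by rw [← h4]; exact h3
      _ < ε * (2 * eps0 c) := h1
  -- combine
  have : Tendsto (fun t => ((γ t).1, (γ t).2)) atTop (nhds ((0:ℝ), (0:ℝ))) := by
    rw [nhds_prod_eq]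
    exact hxtend.prodMk hytend
  simpa using this

end Forward3
section Backward

variable {c : ℝ} {β : ℝ → ℝ × ℝ} (hβ : ∀ t, HasDerivAt β (-(Fc c (β t))) t)
include hβ

lemma backward_limit (hc : 0 < c) {s : ℝ} (hβ0 : β 0 = Qp c s)
    (hcone : ∀ t, 0 ≤ t → β t ∈ cone c) : Tendsto β atTop (nhds ((1:ℝ), (0:ℝ))) := by
  have hsa := sa_pos hc
  have hsb1 := sb_le_one hc
  have hη := eta_pos hc
  have hwle : ∀ t, 0 ≤ t → 1 - (β t).1 ≤ (eta c / 2) * Real.exp (-(sa c * t)) := by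
    intro t ht
    have hin : ∀ τ ∈ Icc (0:ℝ) t, β τ ∈ cone c := fun τ hτ => hcone τ hτ.1
    exact (bw_bounds hβ hc ht hβ0 hin (right_mem_Icc.2 ht)).2.1
  have hexp : Tendsto (fun t : ℝ => (eta c / 2) * Real.exp (-(sa c * t))) atTop (nhds 0) := by
    have h1 : Tendsto (fun t : ℝ => sa c * t) atTop atTop :=
      Tendsto.const_mul_atTop hsa tendsto_id
    have h2 : Tendsto (fun t : ℝ => Real.exp (-(sa c * t))) atTop (nhds 0) :=
      Real.tendsto_exp_neg_atTop_nhds_zero.comp h1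
    have := h2.const_mul (eta c / 2)
    simpa using this
  have hwtend : Tendsto (fun t => 1 - (β t).1) atTop (nhds 0) := by
    apply squeeze_zero' ?_ ?_ hexp
    · filter_upwards [eventually_ge_atTop (0:ℝ)] with t ht
      exact (hcone t ht).1
    · filter_upwards [eventually_ge_atTop (0:ℝ)] with t ht
      exact hwle t ht
  have hxtend : Tendsto (fun t => (β t).1) atTop (nhds 1) := by
    have := (tendsto_const_nhds (x := (1:ℝ)) (f := atTop)).sub hwtend
    simp only [sub_zero] at this
    convert this using 2 with t
    ring
  have hytend : Tendsto (fun t => (β t).2) atTop (nhds 0) := by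
    have habs : Tendsto (fun t => |(β t).2|) atTop (nhds 0) := by
      apply squeeze_zero' ?_ ?_ hwtend
      · filter_upwards with t; exact abs_nonneg _
      · filter_upwards [eventually_ge_atTop (0:ℝ)] with t ht
        obtain ⟨h1, h2, h3, h4⟩ := hcone t ht
        rw [abs_le]
        constructor <;> nlinarith
    exact tendsto_zero_iff_abs_tendsto_zero _ |>.mpr habs
  have : Tendsto (fun t => ((β t).1, (β t).2)) atTop (nhds ((1:ℝ), (0:ℝ))) := by
    rw [nhds_prod_eq]
    exact hxtend.prodMk hytend
  simpa using this

end Backward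

section Assembly

/-- the δ = 1 case of the main theorem -/
lemma fkpp_speed (c : ℝ) (hc : 0 < c) :
    ∃ u : ℝ → ℝ, ContDiff ℝ 2 u ∧
      (∀ z : ℝ, deriv (deriv u) z + c * deriv u z + u z * (1 - u z) = 0) ∧
      Tendsto (fun z => (u z, deriv u z)) atBot (nhds (1, 0)) ∧
      Tendsto (fun z => (u z, deriv u z)) atTop (nhds (0, 0)) := by
  have hGlip := Fc_neg_lip hc
  have hGbd : ∀ p : ℝ × ℝ, ‖-(Fc c p)‖ ≤ 2*c+10 := fun p => by
    rw [norm_neg]; exact Fc_bound hc p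
  choose B hB0 hBd using fun s : ℝ => exists_global_solution hGlip hGbd (Qp c s)
  obtain ⟨sstar, hsmem, hscone⟩ := exists_good_param hc hBd hB0
  obtain ⟨γ, hγ0, hγd⟩ := exists_global_solution (Fc_lip hc) (Fc_bound hc) (Qp c sstar)
  have hrev : ∀ t, B sstar t = γ (-t) := by
    have h1 : ∀ t, HasDerivAt (fun t : ℝ => γ (-t)) (-(Fc c (γ (-t)))) t := by
      intro t
      have h2 := (hγd (-t)).scomp t (hasDerivAt_neg t)
      simpa [Function.comp_def] using h2
    have := global_sol_unique hGlip (hBd sstar) h1 (t₀ := 0)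
      (by rw [hB0 sstar, neg_zero, hγ0])
    exact fun t => congrFun this t
  set u : ℝ → ℝ := fun z => (γ z).1 with hu
  have hγbox : ∀ z : ℝ, |(γ z).1| ≤ 2 ∧ |(γ z).2| ≤ 2 := by
    intro z
    rcases le_or_gt 0 z with h | h
    · exact SS_box hc (forward_invariant hγd hc hsmem hγ0 z h)
    · have : γ z = B sstar (-z) := by rw [hrev (-z), neg_neg]
      rw [this]
      exact cone_box hc (hscone (-z) (by linarith))
  have hux : ∀ z, HasDerivAt u ((γ z).2) z := by
    intro z
    have := fx_deriv hγd z
    rwa [cl_eq (hγbox z).2] at this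
  have hud : deriv u = fun z => (γ z).2 := funext fun z => (hux z).deriv
  have huy : ∀ z, HasDerivAt (fun z => (γ z).2) (-(c*(γ z).2) - (γ z).1*(1-(γ z).1)) z := by
    intro z
    have := fy_deriv hγd z
    rwa [cl_eq (hγbox z).1, cl_eq (hγbox z).2] at this
  have hudd : ∀ z, deriv (deriv u) z = -(c*(γ z).2) - (γ z).1*(1-(γ z).1) := by
    intro z
    rw [hud]
    exact (huy z).deriv
  refine ⟨u, ?_, ?_, ?_, ?_⟩
  · have h21 : (2 : WithTop ℕ∞) = 1 + 1 := by norm_num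
    rw [h21, contDiff_succ_iff_deriv]
    refine ⟨fun z => (hux z).differentiableAt, by simp, ?_⟩
    rw [hud, contDiff_one_iff_deriv]
    refine ⟨fun z => (huy z).differentiableAt, ?_⟩
    have hder : deriv (fun z => (γ z).2) = fun z => -(c*(γ z).2) - (γ z).1*(1-(γ z).1) :=
      funext fun z => (huy z).deriv
    rw [hder]
    have hγc : Continuous γ := fcont hγd
    fun_prop
  · intro z
    rw [hudd z, hud]
    show -(c*(γ z).2) - (γ z).1*(1-(γ z).1) + c * (γ z).2 + (γ z).1 * (1 - (γ z).1) = 0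
    ring
  · have hback := backward_limit (hBd sstar) hc (hB0 sstar) hscone
    have hγbot : Tendsto γ atBot (nhds ((1:ℝ), (0:ℝ))) := by
      have hneg : Tendsto (fun z : ℝ => -z) atBot atTop := tendsto_neg_atBot_atTop
      have h1 := hback.comp hneg
      have h2 : (fun z : ℝ => B sstar (-z)) = γ := by
        funext z
        rw [hrev (-z), neg_neg]
      rwa [show ((B sstar) ∘ fun z : ℝ => -z) = fun z : ℝ => B sstar (-z) from rfl, h2] at h1
    rw [hud]
    have : (fun z => ((γ z).1, (γ z).2)) = γ := by funext z; rfl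
    rw [show (fun z => (u z, (fun z => (γ z).2) z)) = γ from by funext z; rfl]
    exact hγbot
  · have hfwd := forward_limit hγd hc hsmem hγ0
    rw [hud]
    rw [show (fun z => (u z, (fun z => (γ z).2) z)) = γ from by funext z; rfl]
    exact hfwd

end Assembly
/-- For every `δ > 0` and every `c > 0` there is a heteroclinic orbit of the F-KPP
travelling-wave system connecting `(1,0)` to `(0,0)`: a `C²` solution `u` of
`δu'' + cu' + u(1−u) = 0` with `(u, u') → (1,0)` as `z → −∞` and `(u, u') → (0,0)`
as `z → +∞`. -/
theorem fkpp_heteroclinic_exists (δ c : ℝ) (hδ : 0 < δ) (hc : 0 < c) :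
    ∃ u : ℝ → ℝ, ContDiff ℝ 2 u ∧
      (∀ z : ℝ, δ * deriv (deriv u) z + c * deriv u z + u z * (1 - u z) = 0) ∧
      Tendsto (fun z => (u z, deriv u z)) atBot (nhds (1, 0)) ∧
      Tendsto (fun z => (u z, deriv u z)) atTop (nhds (0, 0)) := by
  have hsδ : 0 < Real.sqrt δ := Real.sqrt_pos.2 hδ
  set k : ℝ := (Real.sqrt δ)⁻¹ with hk
  have hk0 : 0 < k := by positivity
  have hk2 : δ * (k * k) = 1 := by
    rw [hk, ← mul_inv]
    rw [Real.mul_self_sqrt hδ.le]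
    field_simp
  obtain ⟨u₁, hcd, hode, hbot, htop⟩ := fkpp_speed (c * k) (by positivity)
  have hdiff1 : Differentiable ℝ u₁ := hcd.differentiable (by norm_num)
  have hcd1 : ContDiff ℝ 1 (deriv u₁) := by
    have h21 : (2 : WithTop ℕ∞) = 1 + 1 := by norm_num
    rw [h21, contDiff_succ_iff_deriv] at hcd
    exact hcd.2.2
  have hdiff2 : Differentiable ℝ (deriv u₁) := hcd1.differentiable (by norm_num)
  set u : ℝ → ℝ := fun z => u₁ (z * k) with hu
  have hmul : ∀ z : ℝ, HasDerivAt (fun z : ℝ => z * k) k z := fun z => hasDerivAt_mul_const k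
  have hux : ∀ z, HasDerivAt u (deriv u₁ (z * k) * k) z := fun z =>
    ((hdiff1 (z * k)).hasDerivAt).comp z (hmul z)
  have hud : deriv u = fun z => deriv u₁ (z * k) * k := funext fun z => (hux z).deriv
  have huy : ∀ z, HasDerivAt (fun z => deriv u₁ (z * k) * k)
      (deriv (deriv u₁) (z * k) * k * k) z := fun z =>
    by have h := (hdiff2 (z * k)).hasDerivAt; exact (h.comp z (hmul z)).mul_const k
  have hudd : ∀ z, deriv (deriv u) z = deriv (deriv u₁) (z * k) * k * k := by
    intro z
    rw [hud]
    exact (huy z).deriv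
  refine ⟨u, ?_, ?_, ?_, ?_⟩
  · exact hcd.comp (contDiff_id.mul contDiff_const)
  · intro z
    rw [hudd z, hud]
    have h1 := hode (z * k)
    show δ * (deriv (deriv u₁) (z * k) * k * k) + c * (deriv u₁ (z * k) * k)
        + u₁ (z * k) * (1 - u₁ (z * k)) = 0
    have h2 : δ * (deriv (deriv u₁) (z * k) * k * k) = deriv (deriv u₁) (z * k) * (δ * (k * k)) := by
      ring
    rw [h2, hk2]
    nlinarith [h1]
  · have hzk : Tendsto (fun z : ℝ => z * k) atBot atBot := tendsto_id.atBot_mul_const hk0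
    have hA : Tendsto (fun w => u₁ w) atBot (nhds 1) :=
      ((continuous_fst.tendsto _).comp hbot)
    have hB : Tendsto (fun w => deriv u₁ w) atBot (nhds 0) :=
      ((continuous_snd.tendsto _).comp hbot)
    have hA' := hA.comp hzk
    have hB' := (hB.comp hzk).mul_const k
    rw [hud]
    have : Tendsto (fun z => (u₁ (z * k), deriv u₁ (z * k) * k)) atBot
        (nhds ((1:ℝ), 0 * k)) := by
      rw [nhds_prod_eq]
      exact hA'.prodMk hB'
    simpa using this
  · have hzk : Tendsto (fun z : ℝ => z * k) atTop atTop := tendsto_id.atTop_mul_const hk0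
    have hA : Tendsto (fun w => u₁ w) atTop (nhds 0) :=
      ((continuous_fst.tendsto _).comp htop)
    have hB : Tendsto (fun w => deriv u₁ w) atTop (nhds 0) :=
      ((continuous_snd.tendsto _).comp htop)
    have hA' := hA.comp hzk
    have hB' := (hB.comp hzk).mul_const k
    rw [hud]
    have : Tendsto (fun z => (u₁ (z * k), deriv u₁ (z * k) * k)) atTop
        (nhds ((0:ℝ), 0 * k)) := by
      rw [nhds_prod_eq]
      exact hA'.prodMk hB'
    simpa using this
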